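/- arXiv:1206.4245 — 3 statements merged into one kernel-verified Lean document; each statement's English description precedes it below -/
import Mathlib

section
/- For any injective code c_n from A^n to binary strings (strictly lossless code), the expected codeword length under any probability distribution μ on A^n is at least H(μ) - log₂(log₂(|A|^n) + 1) - log₂ e; in particular, there is no sequence of injective codes whose expected length is asymptotically below the entropy rate for an i.i.d. source. -/
noncomputable def enc (s : List Bool) : ℕ :=
  Nat.ofDigits 2 (s.map (fun b => cond b 1 0) ++ [1])

lemma enc_digits (s : List Bool) :
    Nat.digits 2 (enc s) = s.map (fun b => cond b 1 0) ++ [1] := by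
  apply Nat.digits_ofDigits 2 one_lt_two
  · intro l hl
    rcases List.mem_append.1 hl with h | h
    · rcases List.mem_map.1 h with ⟨b, _, rfl⟩; cases b <;> norm_num
    · simp_all
  · intro h
    simp [List.getLast_append]

lemma enc_injective : Function.Injective enc := by
  intro s t h
  have := congrArg (Nat.digits 2) h
  rw [enc_digits, enc_digits] at this
  have h2 := List.append_inj_left' this (by simp)
  exact List.map_injective_iff.2 (by intro a b hab; cases a <;> cases b <;> simp_all) h2

lemma enc_lt (s : List Bool) : enc s < 2 ^ (s.length + 1) := by
  have := Nat.ofDigits_lt_base_pow_length (b := 2) (l := s.map (fun b => cond b 1 0) ++ [1])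
    one_lt_two ?_
  · simpa [enc] using this
  · intro l hl
    rcases List.mem_append.1 hl with h | h
    · rcases List.mem_map.1 h with ⟨b, _, rfl⟩; cases b <;> norm_num
    · simp_all

lemma le_enc (s : List Bool) : 2 ^ s.length ≤ enc s := by
  rw [enc, Nat.ofDigits_append]
  simp [Nat.ofDigits]

lemma log_gap {k : ℕ} (hk : 1 ≤ k) :
    (1 : ℝ) / (k + 1) ≤ Real.log (k + 1) - Real.log k := by
  have hk0 : (0:ℝ) < k := by exact_mod_cast hk
  have hk1 : (0:ℝ) < k + 1 := by linarith
  have h := Real.log_le_sub_one_of_pos (x := (k : ℝ) / (k + 1)) (by positivity)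
  rw [Real.log_div (ne_of_gt hk0) (ne_of_gt hk1)] at h
  have : (k:ℝ) / (k+1) - 1 = -(1/(k+1)) := by field_simp; ring
  linarith [this ▸ h]

lemma harm (s : Finset ℕ) (hs : ∀ t ∈ s, 1 ≤ t) :
    ∑ t ∈ s, (1:ℝ)/(t+1) ≤ Real.log (s.card + 1) := by
  induction s using Finset.strongInduction with
  | _ s ih =>
    rcases s.eq_empty_or_nonempty with rfl | hne
    · simp
    · set m := s.max' hne with hm
      have hmem : m ∈ s := s.max'_mem hne
      have hsub : s.erase m ⊂ s := Finset.erase_ssubset hmem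
      have hcard : (s.erase m).card = s.card - 1 := Finset.card_erase_of_mem hmem
      have hcard1 : 1 ≤ s.card := Finset.card_pos.2 hne
      have hscard_le : s.card ≤ m := by
        have : s ⊆ Finset.Icc 1 m := fun t ht =>
          Finset.mem_Icc.2 ⟨hs t ht, s.le_max' t ht⟩
        calc s.card ≤ (Finset.Icc 1 m).card := Finset.card_le_card this
          _ = m := by rw [Nat.card_Icc]; omega
      have key : (∑ t ∈ s.erase m, (1:ℝ)/(t+1)) + 1/(m+1) = ∑ t ∈ s, (1:ℝ)/(t+1) :=
        Finset.sum_erase_add s _ hmem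
      have ih' := ih (s.erase m) hsub (fun t ht => hs t (Finset.mem_of_mem_erase ht))
      have hec : ((s.erase m).card : ℝ) + 1 = s.card := by
        rw [hcard]; push_cast [Nat.cast_sub hcard1]; ring
      rw [hec] at ih'
      rw [← key]
      have h1 : (1:ℝ)/(m+1) ≤ 1/(s.card + 1) := by
        apply one_div_le_one_div_of_le (by positivity)
        exact_mod_cast Nat.add_le_add_right hscard_le 1
      have h2 := log_gap hcard1
      linarith

lemma gibbs {ι : Type*} [Fintype ι] [Nonempty ι] (μ q : ι → ℝ) (hμ0 : ∀ x, 0 ≤ μ x)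
    (hμ1 : ∑ x, μ x = 1) (hq : ∀ x, 0 < q x) :
    ∑ x, μ x * Real.log (μ x)⁻¹ ≤ (∑ x, μ x * Real.log (q x)⁻¹) + Real.log (∑ x, q x) := by
  set S := ∑ x, q x with hS
  have hS0 : 0 < S := Finset.sum_pos (fun x _ => hq x) Finset.univ_nonempty
  have key : ∀ x, μ x * Real.log (μ x)⁻¹ - μ x * Real.log (q x)⁻¹ - μ x * Real.log S
      ≤ q x / S - μ x := by
    intro x
    rcases eq_or_lt_of_le (hμ0 x) with h | h
    · rw [← h]; simp; exact div_nonneg (hq x).le hS0.le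
    · have ht : 0 < q x / (μ x * S) := div_pos (hq x) (mul_pos h hS0)
      have h1 := Real.log_le_sub_one_of_pos ht
      have hlog : Real.log (q x / (μ x * S)) = Real.log (q x) - Real.log (μ x) - Real.log S := by
        rw [Real.log_div (ne_of_gt (hq x)) (mul_pos h hS0).ne',
          Real.log_mul (ne_of_gt h) (ne_of_gt hS0)]
        ring
      rw [hlog] at h1
      have h2 := mul_le_mul_of_nonneg_left h1 (le_of_lt h)
      have h3 : μ x * (q x / (μ x * S) - 1) = q x / S - μ x := by field_simp
      rw [h3] at h2
      have h4 : μ x * Real.log (μ x)⁻¹ - μ x * Real.log (q x)⁻¹ - μ x * Real.log S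
          = μ x * (Real.log (q x) - Real.log (μ x) - Real.log S) := by
        rw [Real.log_inv, Real.log_inv]; ring
      rw [h4]; exact h2
  have hsum := Finset.sum_le_sum (fun x (_ : x ∈ Finset.univ) => key x)
  have h5 : ∑ x, (μ x * Real.log (μ x)⁻¹ - μ x * Real.log (q x)⁻¹ - μ x * Real.log S)
      = (∑ x, μ x * Real.log (μ x)⁻¹) - (∑ x, μ x * Real.log (q x)⁻¹) - Real.log S := by
    rw [Finset.sum_sub_distrib, Finset.sum_sub_distrib, ← Finset.sum_mul, hμ1, one_mul]
  have h6 : ∑ x, (q x / S - μ x) = 0 := by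
    rw [Finset.sum_sub_distrib, ← Finset.sum_div, hμ1, ← hS]
    field_simp; ring
  rw [h5, h6] at hsum
  linarith


/-- Lower bound on the expected codeword length of any one-to-one (injective,
strictly lossless) code `c` on `A^n`: the expected length is at least
`H(μ) - log₂(log₂(|A|^n) + 1) - log₂ e`. -/
theorem stmt0 {A : Type*} [Fintype A] [Nonempty A] (n : ℕ)
    (c : (Fin n → A) → List Bool) (hc : Function.Injective c)
    (μ : (Fin n → A) → ℝ) (hμ0 : ∀ x, 0 ≤ μ x) (hμ1 : ∑ x, μ x = 1) :
    (∑ x, μ x * Real.logb 2 (μ x)⁻¹)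
      - Real.logb 2 (Real.logb 2 ((Fintype.card A : ℝ) ^ n) + 1)
      - Real.logb 2 (Real.exp 1)
    ≤ ∑ x, μ x * ((c x).length : ℝ) := by
  classical
  set M : ℕ := Fintype.card (Fin n → A) with hM
  have hM1 : 1 ≤ M := Fintype.card_pos
  have hM1R : (1:ℝ) ≤ (M:ℝ) := by exact_mod_cast hM1
  set l2 := Real.log 2 with hl2def
  have hl2 : 0 < l2 := Real.log_pos one_lt_two
  have hl2' : l2 ≤ 1 := by
    have := Real.log_le_sub_one_of_pos (by norm_num : (0:ℝ) < 2); linarith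
  have he : (2:ℝ) ≤ Real.exp 1 := by have := Real.add_one_le_exp (1:ℝ); linarith
  have hLM : 0 ≤ Real.log (M:ℝ) := Real.log_nonneg hM1R
  set ℓ : (Fin n → A) → ℕ := fun x => (c x).length with hℓ
  set q : (Fin n → A) → ℝ := fun x => ((2:ℝ) ^ ℓ x)⁻¹ with hqdef
  have hq0 : ∀ x, 0 < q x := fun x => by rw [hqdef]; positivity
  have hg := gibbs μ q hμ0 hμ1 hq0
  have hlogq : ∀ x, Real.log (q x)⁻¹ = (ℓ x : ℝ) * l2 := by
    intro x
    rw [hqdef]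
    simp [Real.log_pow, hl2def]
  set S := ∑ x, q x with hSdef
  have hS0 : 0 < S := Finset.sum_pos (fun x _ => hq0 x) Finset.univ_nonempty
  -- bound S by 2 log (M+1)
  have hinj : Function.Injective (fun x : Fin n → A => enc (c x)) := fun a b h =>
    hc (enc_injective h)
  have step1 : ∀ x, q x ≤ 2 * ((1:ℝ) / ((enc (c x) : ℝ) + 1)) := by
    intro x
    have h1 : (enc (c x) : ℝ) + 1 ≤ 2 * 2 ^ ℓ x := by
      have h2 : enc (c x) + 1 ≤ 2 ^ (ℓ x + 1) := enc_lt (c x)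
      calc (enc (c x) : ℝ) + 1 ≤ ((2 ^ (ℓ x + 1) : ℕ) : ℝ) := by exact_mod_cast h2
        _ = 2 * 2 ^ ℓ x := by push_cast; ring
    have hpos : (0:ℝ) < (enc (c x) : ℝ) + 1 := by positivity
    have hpow : (0:ℝ) < (2:ℝ) ^ ℓ x := by positivity
    show ((2:ℝ) ^ ℓ x)⁻¹ ≤ 2 * ((1:ℝ) / ((enc (c x) : ℝ) + 1))
    rw [inv_eq_one_div, mul_one_div, div_le_div_iff₀ hpow hpos]
    linarith
  have himg : ∑ x, (1:ℝ)/((enc (c x):ℝ) + 1)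
      = ∑ t ∈ Finset.univ.image (fun x : Fin n → A => enc (c x)), (1:ℝ)/((t:ℝ)+1) :=
    (Finset.sum_image (f := fun t : ℕ => (1:ℝ)/((t:ℝ)+1)) (s := Finset.univ)
      (fun a _ b _ h => hinj h)).symm
  have hge : ∀ t ∈ Finset.univ.image (fun x : Fin n → A => enc (c x)), 1 ≤ t := by
    intro t ht
    rcases Finset.mem_image.1 ht with ⟨x, _, rfl⟩
    exact le_trans (Nat.one_le_pow _ _ (by norm_num)) (le_enc (c x))
  have hcard : (Finset.univ.image (fun x : Fin n → A => enc (c x))).card = M := by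
    rw [Finset.card_image_of_injective _ hinj, hM, Finset.card_univ]
  have hharm := harm _ hge
  rw [hcard] at hharm
  have hSle : S ≤ 2 * Real.log ((M:ℝ) + 1) := by
    calc S ≤ ∑ x, 2 * ((1:ℝ) / ((enc (c x) : ℝ) + 1)) :=
          Finset.sum_le_sum (fun x _ => step1 x)
      _ = 2 * ∑ x, (1:ℝ)/((enc (c x):ℝ) + 1) := by rw [← Finset.mul_sum]
      _ ≤ 2 * Real.log ((M:ℝ) + 1) := by rw [himg]; linarith [hharm]
  -- arithmetic: 2 log(M+1) ≤ e (logb 2 M + 1)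
  set L : ℝ := Real.logb 2 (M:ℝ) with hLdef
  have hL0 : 0 ≤ L := Real.logb_nonneg one_lt_two hM1R
  have hlogM1 : Real.log ((M:ℝ)+1) ≤ l2 + Real.log (M:ℝ) := by
    rw [hl2def, ← Real.log_mul two_ne_zero (by linarith : (M:ℝ) ≠ 0)]
    gcongr <;> linarith
  have hLeq : L = Real.log (M:ℝ) / l2 := by rw [hLdef, Real.logb, hl2def]
  have key2 : 2 * Real.log ((M:ℝ)+1) ≤ Real.exp 1 * (L + 1) := by
    have goal' : 2 * Real.log ((M:ℝ)+1) * l2 ≤ Real.exp 1 * (Real.log (M:ℝ) + l2) := by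
      nlinarith [mul_le_mul_of_nonneg_right hlogM1 hl2.le,
        mul_nonneg hLM (by linarith : (0:ℝ) ≤ Real.exp 1 - 2*l2),
        mul_pos hl2 hl2]
    rw [hLeq, ← sub_nonneg]
    have heq : Real.exp 1 * (Real.log (M:ℝ) / l2 + 1) - 2*Real.log ((M:ℝ)+1)
        = (Real.exp 1 * (Real.log (M:ℝ) + l2) - 2*Real.log ((M:ℝ)+1)*l2)/l2 := by
      field_simp
    rw [heq]
    exact div_nonneg (by linarith) hl2.le
  have hlogS : Real.log S ≤ 1 + Real.log (L + 1) := by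
    have h1 : Real.log S ≤ Real.log (Real.exp 1 * (L+1)) := by
      have h2 : S ≤ Real.exp 1 * (L+1) := le_trans hSle key2
      gcongr
    rw [Real.log_mul (Real.exp_ne_zero 1) (by linarith : L + 1 ≠ 0), Real.log_exp] at h1
    exact h1
  -- combine
  have hB : (∑ x, μ x * Real.log (q x)⁻¹) = (∑ x, μ x * ((ℓ x : ℝ))) * l2 := by
    rw [Finset.sum_mul]
    apply Finset.sum_congr rfl
    intro x _
    rw [hlogq x]; ring
  rw [hB] at hg
  -- rewrite goal
  have hcast : ((Fintype.card A : ℝ)) ^ n = (M:ℝ) := by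
    rw [hM, Fintype.card_fun, Fintype.card_fin]
    push_cast
    ring
  rw [hcast]
  simp only [Real.logb, Real.log_exp, ← hl2def]
  simp only [← mul_div_assoc]
  rw [← Finset.sum_div]
  rw [show (∑ x, μ x * Real.log (μ x)⁻¹) / l2 - Real.log (Real.log (M:ℝ) / l2 + 1) / l2 - 1 / l2
      = ((∑ x, μ x * Real.log (μ x)⁻¹) - Real.log (Real.log (M:ℝ) / l2 + 1) - 1) / l2 by ring]
  rw [div_le_iff₀ hl2]
  rw [hLeq] at hlogS
  have hE : ∑ x, μ x * ((c x).length : ℝ) = ∑ x, μ x * ((ℓ x : ℝ)) := rfl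
  rw [hE]
  linarith
end

section
/- Among all measurable sets S ⊆ ℝ^d with P(Z ∈ S) ≥ 1 − p_e, where Z is a nondegenerate Gaussian with mean θ̂ and covariance Σ, a set of minimal Lebesgue measure is the ellipsoid {φ : (φ−θ̂)ᵀ Σ^{−1} (φ−θ̂) ≤ t} for the appropriate threshold t making the probability exactly 1 − p_e. -/
open Real MeasureTheory Matrix Filter

lemma aux_cont15 {X : Type*} [MeasureSpace X] (q : X → ℝ) (hq : Measurable q)
    (hnull : ∀ t : ℝ, volume {x | q x = t} = 0) (g : X → ℝ) (hg : Integrable g) :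
    Continuous (fun t => ∫ x in {x | q x ≤ t}, g x) := by
  rw [continuous_iff_continuousAt]
  intro t₀
  rw [ContinuousAt, tendsto_iff_seq_tendsto]
  intro u hu
  have hmeas : ∀ t : ℝ, MeasurableSet {x | q x ≤ t} := fun t => hq measurableSet_Iic
  simp only [Function.comp_def, ← integral_indicator (hmeas _)]
  apply tendsto_integral_of_dominated_convergence (fun x => ‖g x‖)
  · exact fun n => hg.aestronglyMeasurable.indicator (hmeas _)
  · exact hg.norm
  · exact fun n => Filter.Eventually.of_forall fun x => norm_indicator_le_norm_self g x
  · rw [MeasureTheory.ae_iff]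
    refine measure_mono_null (fun x hx => ?_) (hnull t₀)
    simp only [Set.mem_setOf_eq] at hx ⊢
    by_contra hne
    apply hx
    rcases lt_or_gt_of_ne hne with hlt | hgt
    · have h1 : ∀ᶠ n in atTop, ({x | q x ≤ u n}).indicator g x = g x := by
        filter_upwards [hu.eventually (eventually_gt_nhds hlt)] with n hn
        exact Set.indicator_of_mem (show _ ∈ {x | q x ≤ u n} from hn.le) g
      rw [Set.indicator_of_mem (show _ ∈ {x | q x ≤ t₀} from hlt.le) g]
      exact Tendsto.congr' (h1.mono fun n hn => hn.symm) tendsto_const_nhds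
    · have h1 : ∀ᶠ n in atTop, ({x | q x ≤ u n}).indicator g x = 0 := by
        filter_upwards [hu.eventually (eventually_lt_nhds hgt)] with n hn
        exact Set.indicator_of_notMem (show _ ∉ {x | q x ≤ u n} from not_le.mpr hn) g
      rw [Set.indicator_of_notMem (show _ ∉ {x | q x ≤ t₀} from not_le.mpr hgt) g]
      exact Tendsto.congr' (h1.mono fun n hn => hn.symm) tendsto_const_nhds

lemma aux_lim15 {X : Type*} [MeasureSpace X] (q : X → ℝ) (hq : Measurable q)
    (g : X → ℝ) (hg : Integrable g) :
    Tendsto (fun n : ℕ => ∫ x in {x | q x ≤ (n : ℝ)}, g x) atTop (nhds (∫ x, g x)) := by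
  have hmeas : ∀ t : ℝ, MeasurableSet {x | q x ≤ t} := fun t => hq measurableSet_Iic
  simp only [← integral_indicator (hmeas _)]
  apply tendsto_integral_of_dominated_convergence (fun x => ‖g x‖)
  · exact fun n => hg.aestronglyMeasurable.indicator (hmeas _)
  · exact hg.norm
  · exact fun n => Filter.Eventually.of_forall fun x => norm_indicator_le_norm_self g x
  · refine Filter.Eventually.of_forall fun x => ?_
    have h1 : ∀ᶠ n : ℕ in atTop, ({x | q x ≤ (n : ℝ)}).indicator g x = g x := by
      filter_upwards [(tendsto_natCast_atTop_atTop (R := ℝ)).eventually_ge_atTop (q x)] with n hn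
      exact Set.indicator_of_mem (show _ ∈ {x | q x ≤ (n:ℝ)} from hn) g
    exact Tendsto.congr' (h1.mono fun n hn => hn.symm) tendsto_const_nhds

lemma aux_np15 {X : Type*} [MeasureSpace X] (pdf : X → ℝ) (E S : Set X) (c : ℝ) (hc : 0 < c)
    (hE : MeasurableSet E) (hS : MeasurableSet S) (hEfin : volume E ≠ ⊤)
    (hpdfint : Integrable pdf) (hmem : ∀ z, z ∈ E ↔ c ≤ pdf z)
    (hle : ∫ z in E, pdf z ≤ ∫ z in S, pdf z) :
    volume E ≤ volume S := by
  rcases eq_or_ne (volume S) ⊤ with hSfin | hSfin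
  · exact hSfin ▸ le_top
  have hIE := hpdfint.integrableOn (s := E)
  have hIS := hpdfint.integrableOn (s := S)
  have hsplitE : (∫ z in E ∩ S, pdf z) + ∫ z in E \ S, pdf z = ∫ z in E, pdf z :=
    integral_inter_add_diff hS hIE
  have hsplitS : (∫ z in S ∩ E, pdf z) + ∫ z in S \ E, pdf z = ∫ z in S, pdf z :=
    integral_inter_add_diff hE hIS
  rw [Set.inter_comm S E] at hsplitS
  have h1 : ∫ z in E \ S, pdf z ≤ ∫ z in S \ E, pdf z := by linarith
  have hESfin : volume (E \ S) ≠ ⊤ := fun h => hEfin (eq_top_mono (measure_mono Set.diff_subset) h)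
  have hSEfin : volume (S \ E) ≠ ⊤ := fun h => hSfin (eq_top_mono (measure_mono Set.diff_subset) h)
  have h2 : c * (volume (E \ S)).toReal ≤ ∫ z in E \ S, pdf z :=
    setIntegral_ge_of_const_le_real (hE.diff hS) hESfin
      (fun x hx => (hmem x).mp hx.1) (hpdfint.integrableOn)
  have h3 : ∫ z in S \ E, pdf z ≤ c * (volume (S \ E)).toReal := by
    have := setIntegral_mono_on (hpdfint.integrableOn)
      (integrableOn_const hSEfin) (hS.diff hE)
      (fun x hx => le_of_not_ge fun h => hx.2 ((hmem x).mpr h))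
    simpa [setIntegral_const, smul_eq_mul, mul_comm, Measure.real] using this
  have h4 : (volume (E \ S)).toReal ≤ (volume (S \ E)).toReal :=
    le_of_mul_le_mul_left (h2.trans (h1.trans h3)) hc
  have h5 : volume (E \ S) ≤ volume (S \ E) :=
    (ENNReal.toReal_le_toReal hESfin hSEfin).mp h4
  calc volume E = volume (E ∩ S) + volume (E \ S) := (measure_inter_add_diff E hS).symm
    _ ≤ volume (S ∩ E) + volume (S \ E) := by rw [Set.inter_comm]; exact add_le_add le_rfl h5
    _ = volume S := measure_inter_add_diff S hE

/-- Among all measurable sets of Gaussian probability at least `1 − p_e`, an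
ellipsoid `{φ : (φ−θ̂)ᵀ Σ⁻¹ (φ−θ̂) ≤ t}` of exact probability `1 − p_e` has
minimal Lebesgue measure. The Gaussian `N(θ̂, Σ)` is given by its density `pdf`
with respect to Lebesgue measure. -/
theorem stmt15 (d : ℕ) (hd : 0 < d) (Sig : Matrix (Fin d) (Fin d) ℝ)
    (hSig : Sig.PosDef) (pe : ℝ) (hpe : pe ∈ Set.Ioo (0 : ℝ) 1)
    (θhat : EuclideanSpace ℝ (Fin d))
    (pdf : EuclideanSpace ℝ (Fin d) → ℝ)
    (hpdf : ∀ z, pdf z = (2 * Real.pi) ^ (-(d : ℝ) / 2) * Sig.det ^ (-(1:ℝ) / 2)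
      * Real.exp (-(1 / 2) *
          ((fun i => z i - θhat i) ⬝ᵥ Sig⁻¹.mulVec (fun i => z i - θhat i)))) :
    ∃ t : ℝ,
      (∫ z in {z : EuclideanSpace ℝ (Fin d) |
          (fun i => z i - θhat i) ⬝ᵥ Sig⁻¹.mulVec (fun i => z i - θhat i) ≤ t},
          pdf z) = 1 - pe ∧
      ∀ S : Set (EuclideanSpace ℝ (Fin d)), MeasurableSet S →
        1 - pe ≤ (∫ z in S, pdf z) →
        MeasureTheory.volume
            {z : EuclideanSpace ℝ (Fin d) |
              (fun i => z i - θhat i) ⬝ᵥ Sig⁻¹.mulVec (fun i => z i - θhat i) ≤ t}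
          ≤ MeasureTheory.volume S := by
  haveI : Nonempty (Fin d) := ⟨⟨0, hd⟩⟩
  -- the quadratic form
  set Q : EuclideanSpace ℝ (Fin d) → ℝ := fun z => (fun i => z i - θhat i) ⬝ᵥ Sig⁻¹.mulVec (fun i => z i - θhat i)
    with hQdef
  have hQcont : Continuous Q := by
    simp only [hQdef, dotProduct, Matrix.mulVec]
    fun_prop
  -- matrix preliminaries
  set B := (open scoped MatrixOrder in CFC.sqrt Sig) with hB
  have hBps : B.PosSemidef := open scoped MatrixOrder in Matrix.nonneg_iff_posSemidef.mp (CFC.sqrt_nonneg Sig)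
  have hBB : B * B = Sig := open scoped MatrixOrder in CFC.sqrt_mul_sqrt_self Sig (Matrix.nonneg_iff_posSemidef.mpr hSig.posSemidef)
  have hdet2 : B.det ^ 2 = Sig.det := by rw [← hBB, det_mul, sq]
  have hdetnn : 0 ≤ B.det := by
    rw [hBps.isHermitian.det_eq_prod_eigenvalues]
    exact Finset.prod_nonneg fun i _ => by simpa using hBps.eigenvalues_nonneg i
  have hdetpos : 0 < B.det := by
    rcases hdetnn.lt_or_eq with h | h
    · exact h
    · exfalso; have h2 := hSig.det_pos; rw [← hdet2, ← h] at h2; simp at h2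
  have hBinv : B * B⁻¹ = 1 := mul_nonsing_inv B (isUnit_iff_ne_zero.mpr hdetpos.ne')
  have hBinv' : B⁻¹ * B = 1 := nonsing_inv_mul B (isUnit_iff_ne_zero.mpr hdetpos.ne')
  have hBAB : B * (Sig⁻¹ * B) = 1 := by
    have h : Sig⁻¹ = B⁻¹ * B⁻¹ := by rw [← hBB, Matrix.mul_inv_rev]
    rw [h, show B * (B⁻¹ * B⁻¹ * B) = (B * B⁻¹) * (B⁻¹ * B) by
      rw [Matrix.mul_assoc, Matrix.mul_assoc], hBinv, hBinv', Matrix.one_mul]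
  have hBh : Bᵀ = B := hBps.isHermitian
  have hquad : ∀ v : Fin d → ℝ, (B.mulVec v) ⬝ᵥ Sig⁻¹.mulVec (B.mulVec v) = v ⬝ᵥ v := by
    intro v
    nth_rewrite 1 [show B.mulVec v = Matrix.vecMul v B by
      conv_lhs => rw [← hBh]
      exact Matrix.mulVec_transpose B v]
    rw [Matrix.mulVec_mulVec, dotProduct_mulVec, Matrix.vecMul_vecMul, hBAB,
      Matrix.vecMul_one]
  -- the affine change of variables
  set L := LinearMap.toContinuousLinearMap (Matrix.toEuclideanLin B) with hL
  set f : EuclideanSpace ℝ (Fin d) → EuclideanSpace ℝ (Fin d) := fun x => θhat + L x with hf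
  have hfc : Continuous f := continuous_const.add L.continuous
  have hLcoord : ∀ (u : EuclideanSpace ℝ (Fin d)), (fun j => (L u) j) = B.mulVec (fun j => u j) := fun u => rfl
  have hLinj : Function.Injective L := by
    intro x y hxy
    have hx := congrArg (fun u : EuclideanSpace ℝ (Fin d) => B⁻¹.mulVec (fun j => u j)) hxy
    simp only [hLcoord] at hx
    rw [Matrix.mulVec_mulVec, Matrix.mulVec_mulVec, hBinv', Matrix.one_mulVec,
      Matrix.one_mulVec] at hx
    ext j
    exact congrFun hx j
  have hfinj : Function.Injective f := fun x y hxy => hLinj (add_left_cancel hxy)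
  have hfsurj : Function.Surjective f := by
    intro y
    refine ⟨(WithLp.toLp 2 (B⁻¹.mulVec (fun i => y i - θhat i))), ?_⟩
    apply PiLp.ext
    intro i
    show θhat i + (L _) i = y i
    have := congrFun (hLcoord ((WithLp.toLp 2 (B⁻¹.mulVec (fun i => y i - θhat i))) : EuclideanSpace ℝ (Fin d))) i
    rw [this]
    show θhat i + (B.mulVec (B⁻¹.mulVec fun i => y i - θhat i)) i = y i
    rw [Matrix.mulVec_mulVec, hBinv, Matrix.one_mulVec]
    ring
  have hnormdot : ∀ x : EuclideanSpace ℝ (Fin d), ‖x‖^2 = (fun j => x j) ⬝ᵥ (fun j => x j) := by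
    intro x
    rw [EuclideanSpace.norm_eq, Real.sq_sqrt (by positivity)]
    simp [dotProduct, Real.norm_eq_abs, sq_abs, sq]
  have hQf : ∀ x : EuclideanSpace ℝ (Fin d), Q (f x) = ‖x‖^2 := by
    intro x
    have hcoord : (fun i => f x i - θhat i) = B.mulVec (fun j => x j) := by
      funext i
      show θhat i + (L x) i - θhat i = _
      rw [congrFun (hLcoord x) i]
      ring
    show (fun i => f x i - θhat i) ⬝ᵥ Sig⁻¹.mulVec (fun i => f x i - θhat i) = ‖x‖^2
    rw [hcoord, hquad, hnormdot]
  have hEimg : ∀ t : ℝ, {z : EuclideanSpace ℝ (Fin d) | Q z ≤ t} = f '' {x : EuclideanSpace ℝ (Fin d) | ‖x‖^2 ≤ t} := by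
    intro t
    have hpre : f ⁻¹' {z : EuclideanSpace ℝ (Fin d) | Q z ≤ t}
        = {x : EuclideanSpace ℝ (Fin d) | ‖x‖^2 ≤ t} := by
      ext x
      show Q (f x) ≤ t ↔ ‖x‖^2 ≤ t
      rw [hQf]
    rw [← Set.image_preimage_eq {z : EuclideanSpace ℝ (Fin d) | Q z ≤ t} hfsurj, hpre]
  have hKmeas : ∀ t : ℝ, MeasurableSet {x : EuclideanSpace ℝ (Fin d) | ‖x‖^2 ≤ t} := fun t =>
    (isClosed_le ((continuous_norm).pow 2) continuous_const).measurableSet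
  -- constants
  set pref : ℝ := (2 * Real.pi) ^ (-(d : ℝ) / 2) * Sig.det ^ (-(1:ℝ) / 2) with hpref
  have hprefpos : 0 < pref :=
    mul_pos (Real.rpow_pos_of_pos (by positivity) _) (Real.rpow_pos_of_pos hSig.det_pos _)
  set c₀ : ℝ := (2 * Real.pi) ^ (-(d : ℝ) / 2) with hc₀
  have hdetB : B.det = Sig.det ^ ((1:ℝ)/2) := by
    rw [← Real.sqrt_eq_rpow, ← hdet2, Real.sqrt_sq hdetnn]
  have hconst : |B.det| * pref = c₀ := by
    rw [abs_of_pos hdetpos, hdetB]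
    show Sig.det ^ ((1:ℝ)/2) * ((2 * π) ^ (-(d:ℝ)/2) * Sig.det ^ (-(1:ℝ)/2)) = (2 * π) ^ (-(d:ℝ)/2)
    rw [mul_comm, mul_assoc, ← Real.rpow_add hSig.det_pos]
    norm_num
  set g : EuclideanSpace ℝ (Fin d) → ℝ := fun x => c₀ * Real.exp (-(1/2) * ‖x‖^2) with hg
  have hpdff : ∀ x : EuclideanSpace ℝ (Fin d), |B.det| * pdf (f x) = g x := by
    intro x
    rw [hpdf (f x)]
    show |B.det| * (pref * Real.exp (-(1/2) * Q (f x))) = g x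
    rw [hQf, ← mul_assoc, hconst]
  -- change of variables
  have hCoV : ∀ s : Set (EuclideanSpace ℝ (Fin d)), MeasurableSet s → ∫ z in f '' s, pdf z = ∫ x in s, g x := by
    intro s hs
    have hfderiv : ∀ x ∈ s, HasFDerivWithinAt f L s x := fun x _ =>
      ((L.hasFDerivAt).const_add θhat).hasFDerivWithinAt
    have hdetL : L.det = B.det := by
      rw [ContinuousLinearMap.det, hL, LinearMap.coe_toContinuousLinearMap,
        Matrix.toEuclideanLin_eq_toLin, LinearMap.det_toLin]
    rw [integral_image_eq_integral_abs_det_fderiv_smul volume hs hfderiv (hfinj.injOn) pdf]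
    congr 1
    funext x
    rw [smul_eq_mul, hdetL, hpdff]
  -- properties of the standard Gaussian g
  have hgexp_int : Integrable (fun v : EuclideanSpace ℝ (Fin d) => rexp (-(1/2) * ‖v‖^2)) := by
    have h := (GaussianFourier.integrable_cexp_neg_mul_sq_norm_add (V := EuclideanSpace ℝ (Fin d))
      (b := (1/2 : ℂ)) (by norm_num) 0 0).re
    have heq : ∀ x : EuclideanSpace ℝ (Fin d),
        (Complex.exp (-(2⁻¹ * (‖x‖:ℂ) ^ 2))).re = rexp (-(2⁻¹ * ‖x‖ ^ 2)) := by
      intro x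
      rw [show (-(2⁻¹ * (‖x‖:ℂ) ^ 2)) = ((-(2⁻¹ * ‖x‖ ^ 2) : ℝ) : ℂ) by push_cast; ring,
        Complex.exp_ofReal_re]
    simp only [neg_mul] at h ⊢
    simpa [heq] using h
  have hgint : Integrable g := hgexp_int.const_mul c₀
  have hgtot : ∫ x : EuclideanSpace ℝ (Fin d), g x = 1 := by
    rw [hg]
    rw [integral_const_mul]
    rw [GaussianFourier.integral_rexp_neg_mul_sq_norm (by norm_num : (0:ℝ) < 1/2)]
    have : ((π : ℝ) / (1/2)) = 2 * π := by ring
    rw [this, finrank_euclideanSpace_fin]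
    show (2 * π) ^ (-(d:ℝ)/2) * (2*π) ^ ((d:ℝ)/2) = 1
    rw [← Real.rpow_add (by positivity), show (-(d:ℝ)/2 + (d:ℝ)/2) = 0 by ring, Real.rpow_zero]
  have hnull : ∀ t : ℝ, volume {x : EuclideanSpace ℝ (Fin d) | ‖x‖^2 = t} = 0 := by
    intro t
    refine measure_mono_null (fun x hx => ?_) (Measure.addHaar_sphere volume (0:EuclideanSpace ℝ (Fin d)) (√t))
    simp only [Set.mem_setOf_eq] at hx
    rw [mem_sphere_zero_iff_norm, ← Real.sqrt_sq (norm_nonneg x), hx]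
  -- the distribution function
  set H : ℝ → ℝ := fun t => ∫ x in {x : EuclideanSpace ℝ (Fin d) | ‖x‖^2 ≤ t}, g x with hH
  have hq_meas : Measurable (fun x : EuclideanSpace ℝ (Fin d) => ‖x‖^2) := ((continuous_norm).pow 2).measurable
  have hHcont : Continuous H := aux_cont15 _ hq_meas hnull g hgint
  have hHlim : Tendsto (fun n : ℕ => H n) atTop (nhds 1) := by
    have := aux_lim15 (fun x : EuclideanSpace ℝ (Fin d) => ‖x‖^2) hq_meas g hgint
    rwa [hgtot] at this
  have hH0 : H 0 = 0 := by
    have h0 : volume {x : EuclideanSpace ℝ (Fin d) | ‖x‖^2 ≤ 0} = 0 := by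
      refine measure_mono_null (fun x hx => ?_) (hnull 0)
      simp only [Set.mem_setOf_eq] at hx ⊢
      exact le_antisymm hx (sq_nonneg _)
    rw [hH]
    show ∫ x in {x : EuclideanSpace ℝ (Fin d) | ‖x‖^2 ≤ (0:ℝ)}, g x = 0
    rw [Measure.restrict_eq_zero.mpr h0, integral_zero_measure]
  obtain ⟨N, hN⟩ : ∃ n : ℕ, 1 - pe < H n :=
    (hHlim.eventually (eventually_gt_nhds (by linarith [hpe.1] : 1 - pe < 1))).exists
  obtain ⟨t, htmem, htval⟩ : ∃ t ∈ Set.Icc (0:ℝ) (N:ℝ), H t = 1 - pe := by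
    have hivt := intermediate_value_Icc (by positivity : (0:ℝ) ≤ (N:ℝ)) hHcont.continuousOn
    have hmem : (1 - pe) ∈ Set.Icc (H 0) (H N) := ⟨by rw [hH0]; linarith [hpe.2], hN.le⟩
    exact hivt hmem
  -- the value of the candidate set
  have hG : ∀ s : ℝ, ∫ z in {z : EuclideanSpace ℝ (Fin d) | Q z ≤ s}, pdf z = H s := by
    intro s
    rw [hEimg s, hCoV _ (hKmeas s)]
  refine ⟨t, ?_, ?_⟩
  · exact (hG t).trans htval
  · intro S hSmeas hSint
    -- optimality via Neyman–Pearson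
    have hpdf_int : Integrable pdf := by
      rw [← integrableOn_univ, ← Set.image_univ_of_surjective hfsurj,
        integrableOn_image_iff_integrableOn_abs_det_fderiv_smul volume MeasurableSet.univ
          (fun x _ => ((L.hasFDerivAt).const_add θhat).hasFDerivWithinAt) (hfinj.injOn) pdf]
      have hdetL : L.det = B.det := by
        rw [ContinuousLinearMap.det, hL, LinearMap.coe_toContinuousLinearMap,
          Matrix.toEuclideanLin_eq_toLin, LinearMap.det_toLin]
      have : (fun x => |L.det| • pdf (f x)) = g := by
        funext x; rw [smul_eq_mul, hdetL, hpdff]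
      rw [this]
      exact hgint.integrableOn
    have hEmeas : MeasurableSet {z : EuclideanSpace ℝ (Fin d) | Q z ≤ t} :=
      (isClosed_le hQcont continuous_const).measurableSet
    have hEfin : volume {z : EuclideanSpace ℝ (Fin d) | Q z ≤ t} ≠ ⊤ := by
      have hKcpt : IsCompact {x : EuclideanSpace ℝ (Fin d) | ‖x‖^2 ≤ t} := by
        apply Metric.isCompact_of_isClosed_isBounded
          (isClosed_le ((continuous_norm).pow 2) continuous_const)
        apply Bornology.IsBounded.subset (Metric.isBounded_closedBall (x := (0:EuclideanSpace ℝ (Fin d)))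
          (r := Real.sqrt (max t 0)))
        intro x hx
        rw [Metric.mem_closedBall, dist_zero_right]
        have h1 : ‖x‖^2 ≤ max t 0 := le_trans hx (le_max_left _ _)
        calc ‖x‖ = Real.sqrt (‖x‖^2) := (Real.sqrt_sq (norm_nonneg x)).symm
          _ ≤ Real.sqrt (max t 0) := Real.sqrt_le_sqrt h1
      rw [hEimg t]
      exact ((hKcpt.image hfc).measure_lt_top).ne
    have hc : (0:ℝ) < pref * Real.exp (-(1/2) * t) := mul_pos hprefpos (Real.exp_pos _)
    have hmem : ∀ z : EuclideanSpace ℝ (Fin d), z ∈ {z : EuclideanSpace ℝ (Fin d) | Q z ≤ t} ↔ pref * Real.exp (-(1/2) * t) ≤ pdf z := by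
      intro z
      rw [Set.mem_setOf_eq, hpdf z]
      show Q z ≤ t ↔ pref * rexp (-(1/2) * t) ≤ pref * rexp (-(1/2) * Q z)
      rw [mul_le_mul_iff_right₀ hprefpos, Real.exp_le_exp]
      constructor <;> intro h <;> linarith
    have hle : ∫ z in {z : EuclideanSpace ℝ (Fin d) | Q z ≤ t}, pdf z ≤ ∫ z in S, pdf z := by
      rw [(hG t).trans htval]; exact hSint
    exact aux_np15 pdf {z : EuclideanSpace ℝ (Fin d) | Q z ≤ t} S _ hc hEmeas hSmeas hEfin hpdf_int hmem hle
end

section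
/- For d > 0 and p_e → 0⁺, the solution δ_d(p_e) of Γ(d/2, δ) = p_e·Γ(d/2) (upper incomplete Gamma) satisfies δ_d(p_e) = ln(1/p_e) + ((d/2) − 1)·ln ln(1/p_e) + O(1); in particular δ_d(p_e)/ln(1/p_e) → 1 as p_e → 0. -/
open Real MeasureTheory Filter Asymptotics
open Set Topology

private lemma aux_integrable {s : ℝ} (hs : 0 < s) {x : ℝ} (hx : 0 ≤ x) :
    IntegrableOn (fun t : ℝ => t ^ (s - 1) * Real.exp (-t)) (Set.Ioi x) := by
  refine ((Real.GammaIntegral_convergent hs).mono_set (Set.Ioi_subset_Ioi hx)).congr_fun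
    (fun t _ => mul_comm _ _) measurableSet_Ioi

private lemma aux_nonneg {s : ℝ} {x : ℝ} (hx : 0 ≤ x) :
    0 ≤ᵐ[(volume : Measure ℝ).restrict (Set.Ioi x)]
      (fun t : ℝ => t ^ (s - 1) * Real.exp (-t)) := by
  filter_upwards [ae_restrict_mem measurableSet_Ioi] with t ht
  exact mul_nonneg (Real.rpow_nonneg (hx.trans ht.le) _) (Real.exp_pos _).le

private lemma aux_anti {s : ℝ} (hs : 0 < s) {x y : ℝ} (hx : 0 ≤ x) (hxy : x ≤ y) :
    (∫ t in Set.Ioi y, t ^ (s - 1) * Real.exp (-t))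
      ≤ ∫ t in Set.Ioi x, t ^ (s - 1) * Real.exp (-t) := by
  apply setIntegral_mono_set (aux_integrable hs hx) (aux_nonneg hx)
  exact HasSubset.Subset.eventuallyLE (Set.Ioi_subset_Ioi hxy)

private lemma aux_pos {s : ℝ} (hs : 0 < s) {x : ℝ} (hx : 0 ≤ x) :
    0 < ∫ t in Set.Ioi x, t ^ (s - 1) * Real.exp (-t) := by
  rw [setIntegral_pos_iff_support_of_nonneg_ae (aux_nonneg hx) (aux_integrable hs hx)]
  have hsub : Set.Ioi x ⊆ Function.support (fun t : ℝ => t ^ (s - 1) * Real.exp (-t)) := by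
    intro t ht
    have h0t : 0 < t := lt_of_le_of_lt hx ht
    exact ne_of_gt (mul_pos (Real.rpow_pos_of_pos h0t _) (Real.exp_pos _))
  have : Function.support (fun t : ℝ => t ^ (s - 1) * Real.exp (-t)) ∩ Set.Ioi x = Set.Ioi x :=
    Set.inter_eq_self_of_subset_right hsub
  rw [this]
  simp [Real.volume_Ioi]

private lemma aux_exp_int {x : ℝ} :
    (∫ t in Set.Ioi x, Real.exp (-(t / 2))) = 2 * Real.exp (-(x / 2)) := by
  have h := MeasureTheory.integral_comp_mul_right_Ioi (fun u => Real.exp (-u)) x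
    (by norm_num : (0:ℝ) < 1/2)
  simp only [smul_eq_mul] at h
  rw [integral_exp_neg_Ioi] at h
  have e1 : (fun t : ℝ => Real.exp (-(t * (1/2)))) = fun t : ℝ => Real.exp (-(t / 2)) := by
    funext t; ring_nf
  rw [e1] at h
  rw [h]; ring_nf

private lemma aux_exp_integrable {x : ℝ} :
    IntegrableOn (fun t : ℝ => Real.exp (-(t / 2))) (Set.Ioi x) := by
  have := exp_neg_integrableOn_Ioi x (by norm_num : (0:ℝ) < 1/2)
  refine this.congr_fun (fun t _ => by ring_nf) measurableSet_Ioi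

private lemma aux_upper {s : ℝ} (hs : 0 < s) {x : ℝ} (hx1 : 1 ≤ x) (hx2 : 2 * (s - 1) ≤ x) :
    (∫ t in Set.Ioi x, t ^ (s - 1) * Real.exp (-t)) ≤ 2 * (x ^ (s - 1) * Real.exp (-x)) := by
  have hx0 : 0 < x := lt_of_lt_of_le one_pos hx1
  have hpt : ∀ t ∈ Set.Ioi x, t ^ (s - 1) * Real.exp (-t)
      ≤ (x ^ (s - 1) * Real.exp (-(x / 2))) * Real.exp (-(t / 2)) := by
    intro t ht
    have htx : x ≤ t := le_of_lt ht
    have ht0 : 0 < t := lt_of_lt_of_le hx0 htx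
    have key : t ^ (s - 1) ≤ x ^ (s - 1) * Real.exp ((t - x) / 2) := by
      rcases le_or_gt s 1 with hs1 | hs1
      · have h1 : t ^ (s - 1) ≤ x ^ (s - 1) :=
          Real.rpow_le_rpow_of_nonpos hx0 htx (by linarith)
        have h2 : (1:ℝ) ≤ Real.exp ((t - x) / 2) := by
          rw [← Real.exp_zero]; exact Real.exp_le_exp.mpr (by linarith)
        nlinarith [Real.rpow_nonneg hx0.le (s - 1)]
      · have htx' : 0 < t / x := div_pos ht0 hx0
        have h1 : t ^ (s - 1) = x ^ (s - 1) * (t / x) ^ (s - 1) := by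
          rw [← Real.mul_rpow hx0.le (le_of_lt htx')]
          rw [mul_div_cancel₀ _ (ne_of_gt hx0)]
        have h2 : (t / x) ^ (s - 1) = Real.exp ((s - 1) * Real.log (t / x)) :=
          by rw [Real.rpow_def_of_pos htx']; ring_nf
        have h3 : Real.log (t / x) ≤ t / x - 1 := Real.log_le_sub_one_of_pos htx'
        have h4 : (s - 1) * Real.log (t / x) ≤ (t - x) / 2 := by
          have h5 : (s - 1) * Real.log (t / x) ≤ (s - 1) * (t / x - 1) := by
            apply mul_le_mul_of_nonneg_left h3 (by linarith)
          refine h5.trans ?_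
          rw [div_sub_one (ne_of_gt hx0), mul_div_assoc', div_le_div_iff₀ hx0 two_pos]
          nlinarith
        calc t ^ (s - 1) = x ^ (s - 1) * Real.exp ((s - 1) * Real.log (t / x)) := by
              rw [h1, h2]
          _ ≤ x ^ (s - 1) * Real.exp ((t - x) / 2) := by
              apply mul_le_mul_of_nonneg_left (Real.exp_le_exp.mpr h4)
                (Real.rpow_nonneg hx0.le _)
    calc t ^ (s - 1) * Real.exp (-t)
        ≤ (x ^ (s - 1) * Real.exp ((t - x) / 2)) * Real.exp (-t) := by
          apply mul_le_mul_of_nonneg_right key (Real.exp_pos _).le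
      _ = (x ^ (s - 1) * Real.exp (-(x / 2))) * Real.exp (-(t / 2)) := by
          rw [mul_assoc, mul_assoc, ← Real.exp_add, ← Real.exp_add]
          ring_nf
  calc (∫ t in Set.Ioi x, t ^ (s - 1) * Real.exp (-t))
      ≤ ∫ t in Set.Ioi x, (x ^ (s - 1) * Real.exp (-(x / 2))) * Real.exp (-(t / 2)) := by
        apply setIntegral_mono_on (aux_integrable hs hx0.le)
          (aux_exp_integrable.const_mul _) measurableSet_Ioi hpt
    _ = (x ^ (s - 1) * Real.exp (-(x / 2))) * ∫ t in Set.Ioi x, Real.exp (-(t / 2)) := by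
        rw [MeasureTheory.integral_const_mul]
    _ = 2 * (x ^ (s - 1) * Real.exp (-x)) := by
        rw [aux_exp_int]
        have he : Real.exp (-(x/2)) * Real.exp (-(x/2)) = Real.exp (-x) := by
          rw [← Real.exp_add]; ring_nf
        nlinarith [Real.rpow_nonneg hx0.le (s-1), Real.exp_pos (-(x/2))]

private lemma aux_lower {s : ℝ} (hs : 0 < s) {x : ℝ} (hx1 : 1 ≤ x) :
    (min 1 (2 ^ (s - 1)) * Real.exp (-1)) * (x ^ (s - 1) * Real.exp (-x))
      ≤ ∫ t in Set.Ioi x, t ^ (s - 1) * Real.exp (-t) := by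
  have hx0 : 0 < x := lt_of_lt_of_le one_pos hx1
  set c : ℝ := min 1 (2 ^ (s - 1)) * x ^ (s - 1) * Real.exp (-(x + 1)) with hc
  have hstep : ∀ t ∈ Set.Ioc x (x + 1), c ≤ t ^ (s - 1) * Real.exp (-t) := by
    intro t ht
    have ht0 : 0 < t := lt_of_lt_of_le hx0 ht.1.le
    have hexp : Real.exp (-(x + 1)) ≤ Real.exp (-t) := Real.exp_le_exp.mpr (by linarith [ht.2])
    have hrpow : min 1 (2 ^ (s - 1)) * x ^ (s - 1) ≤ t ^ (s - 1) := by
      rcases le_or_gt 1 s with hs1 | hs1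
      · have h1 : x ^ (s - 1) ≤ t ^ (s - 1) :=
          Real.rpow_le_rpow hx0.le ht.1.le (by linarith)
        have h2 : min 1 ((2:ℝ) ^ (s - 1)) ≤ 1 := min_le_left _ _
        nlinarith [mul_le_mul_of_nonneg_right h2 (Real.rpow_nonneg hx0.le (s - 1))]
      · have h1 : (2 * x) ^ (s - 1) ≤ t ^ (s - 1) :=
          Real.rpow_le_rpow_of_nonpos ht0 (by linarith [ht.2, hx1]) (by linarith)
        have h2 : (2 * x) ^ (s - 1) = (2:ℝ) ^ (s - 1) * x ^ (s - 1) :=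
          Real.mul_rpow (by norm_num) hx0.le
        have h3 : min 1 ((2:ℝ) ^ (s - 1)) ≤ (2:ℝ) ^ (s - 1) := min_le_right _ _
        nlinarith [mul_le_mul_of_nonneg_right h3 (Real.rpow_nonneg hx0.le (s - 1))]
    calc c = (min 1 (2 ^ (s - 1)) * x ^ (s - 1)) * Real.exp (-(x + 1)) := by rw [hc]; try ring
      _ ≤ t ^ (s - 1) * Real.exp (-t) := by
          apply mul_le_mul hrpow hexp (Real.exp_pos _).le
          exact le_trans (by positivity) hrpow
  have hmeas : (volume (Set.Ioc x (x + 1))).toReal = 1 := by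
    rw [Real.volume_Ioc]; simp
  have h1 : c * 1 ≤ ∫ t in Set.Ioc x (x + 1), t ^ (s - 1) * Real.exp (-t) := by
    have h := setIntegral_ge_of_const_le measurableSet_Ioc (by simp) hstep
      ((aux_integrable hs hx0.le).mono_set Set.Ioc_subset_Ioi_self)
    rw [measureReal_def, hmeas, smul_eq_mul] at h
    linarith
  have h2 : (∫ t in Set.Ioc x (x + 1), t ^ (s - 1) * Real.exp (-t))
      ≤ ∫ t in Set.Ioi x, t ^ (s - 1) * Real.exp (-t) := by
    apply setIntegral_mono_set (aux_integrable hs hx0.le)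
    · filter_upwards [ae_restrict_mem measurableSet_Ioi] with t ht
      exact mul_nonneg (Real.rpow_nonneg (hx0.le.trans ht.le) _) (Real.exp_pos _).le
    · exact HasSubset.Subset.eventuallyLE Set.Ioc_subset_Ioi_self
  have hceq : (min 1 (2 ^ (s - 1)) * Real.exp (-1)) * (x ^ (s - 1) * Real.exp (-x)) = c := by
    have he : Real.exp (-(x + 1)) = Real.exp (-1) * Real.exp (-x) := by
      rw [← Real.exp_add]; ring_nf
    rw [hc, he]; ring
  linarith

/-- Asymptotics of `δ_d(p_e)` as `p_e → 0⁺`: if `δ_d` solves the upper incomplete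
Gamma equation `Γ(d/2, δ_d(p)) = p·Γ(d/2)`, then
`δ_d(p) = ln(1/p) + (d/2 − 1)·ln ln(1/p) + O(1)`; in particular
`δ_d(p)/ln(1/p) → 1`. -/
theorem stmt17 (d : ℝ) (hd : 0 < d) (δd : ℝ → ℝ)
    (hpos : ∀ p ∈ Set.Ioo (0 : ℝ) 1, 0 < δd p)
    (hdef : ∀ p ∈ Set.Ioo (0 : ℝ) 1,
      (∫ t in Set.Ioi (δd p), t ^ (d / 2 - 1) * Real.exp (-t))
        = p * Real.Gamma (d / 2)) :
    (fun p : ℝ => δd p - Real.log (1 / p)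
        - (d / 2 - 1) * Real.log (Real.log (1 / p)))
      =O[nhdsWithin 0 (Set.Ioi 0)] (fun _ : ℝ => (1 : ℝ)) ∧
    Filter.Tendsto (fun p : ℝ => δd p / Real.log (1 / p))
      (nhdsWithin 0 (Set.Ioi 0)) (nhds 1) := by
  set s : ℝ := d / 2 with hs_def
  have hs : 0 < s := half_pos hd
  set l := nhdsWithin (0:ℝ) (Set.Ioi 0) with hl
  have hΓ : 0 < Real.Gamma s := Real.Gamma_pos_of_pos hs
  have hmem : ∀ᶠ p in l, p ∈ Set.Ioo (0:ℝ) 1 :=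
    Ioo_mem_nhdsGT_of_mem (by constructor <;> norm_num)
  -- δd tends to infinity
  have htop : Tendsto δd l atTop := by
    rw [tendsto_atTop]
    intro b
    set b' := max b 1 with hb'
    have hb'0 : (0:ℝ) ≤ b' := le_trans zero_le_one (le_max_right _ _)
    have hgb : 0 < ∫ t in Set.Ioi b', t ^ (s - 1) * Real.exp (-t) := aux_pos hs hb'0
    set ε := (∫ t in Set.Ioi b', t ^ (s - 1) * Real.exp (-t)) / Real.Gamma s with hε
    have hεpos : 0 < ε := div_pos hgb hΓ
    have hevε : ∀ᶠ p in l, p < ε := by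
      have hIoo : Set.Ioo (0:ℝ) ε ∈ l := Ioo_mem_nhdsGT_of_mem ⟨le_refl 0, hεpos⟩
      filter_upwards [hIoo] with p hp using hp.2
    filter_upwards [hmem, hevε] with p hp hpε
    by_contra hcon
    push_neg at hcon
    have h1 : δd p ≤ b' := le_trans hcon.le (le_max_left _ _)
    have h2 := aux_anti hs (hpos p hp).le h1
    rw [hdef p hp] at h2
    have h3 : p * Real.Gamma s < ε * Real.Gamma s :=
      mul_lt_mul_of_pos_right hpε hΓ
    rw [hε, div_mul_cancel₀ _ (ne_of_gt hΓ)] at h3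
    linarith
  -- constants
  set c1 : ℝ := min 1 ((2:ℝ) ^ (s - 1)) * Real.exp (-1) with hc1
  have hc1pos : 0 < c1 :=
    mul_pos (lt_min one_pos (Real.rpow_pos_of_pos two_pos _)) (Real.exp_pos _)
  set K : ℝ := |Real.log c1 - Real.log (Real.Gamma s)|
      + |Real.log 2 - Real.log (Real.Gamma s)| with hK
  have hxev : ∀ᶠ p in l, max 1 (2 * (s - 1)) ≤ δd p := htop.eventually_ge_atTop _
  -- main bound
  have hbound : ∀ᶠ p in l,
      |δd p - (s - 1) * Real.log (δd p) - Real.log (1 / p)| ≤ K := by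
    filter_upwards [hmem, hxev] with p hp hx
    have hx1 : 1 ≤ δd p := le_trans (le_max_left _ _) hx
    have hx2 : 2 * (s - 1) ≤ δd p := le_trans (le_max_right _ _) hx
    have hx0 : 0 < δd p := lt_of_lt_of_le one_pos hx1
    have hup := aux_upper hs hx1 hx2
    have hlo := aux_lower hs hx1
    rw [hdef p hp] at hup hlo
    have hppos := hp.1
    have hgpos : 0 < p * Real.Gamma s := mul_pos hppos hΓ
    have hrp : 0 < (δd p) ^ (s - 1) := Real.rpow_pos_of_pos hx0 _
    have hfpos : 0 < (δd p) ^ (s - 1) * Real.exp (-(δd p)) := mul_pos hrp (Real.exp_pos _)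
    have hlog_up : Real.log p + Real.log (Real.Gamma s)
        ≤ Real.log 2 + ((s - 1) * Real.log (δd p) + (-(δd p))) := by
      have h := (Real.log_le_log_iff hgpos (by positivity)).mpr hup
      rwa [Real.log_mul (ne_of_gt hppos) (ne_of_gt hΓ),
        Real.log_mul two_ne_zero (ne_of_gt hfpos),
        Real.log_mul (ne_of_gt hrp) (ne_of_gt (Real.exp_pos _)),
        Real.log_rpow hx0, Real.log_exp] at h
    have hlog_lo : Real.log c1 + ((s - 1) * Real.log (δd p) + (-(δd p)))
        ≤ Real.log p + Real.log (Real.Gamma s) := by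
      have h := (Real.log_le_log_iff (by positivity) hgpos).mpr hlo
      rwa [Real.log_mul (ne_of_gt hppos) (ne_of_gt hΓ),
        Real.log_mul (ne_of_gt hc1pos) (ne_of_gt hfpos),
        Real.log_mul (ne_of_gt hrp) (ne_of_gt (Real.exp_pos _)),
        Real.log_rpow hx0, Real.log_exp] at h
    have hL : Real.log (1 / p) = -Real.log p := by rw [one_div, Real.log_inv]
    rw [abs_le, hL]
    constructor
    · have := neg_abs_le (Real.log c1 - Real.log (Real.Gamma s))
      have h2 := abs_nonneg (Real.log 2 - Real.log (Real.Gamma s))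
      rw [hK]; linarith
    · have := le_abs_self (Real.log 2 - Real.log (Real.Gamma s))
      have h2 := abs_nonneg (Real.log c1 - Real.log (Real.Gamma s))
      rw [hK]; linarith
  -- tendsto of log(1/p)/δd p to 1
  have hlogdiv : Tendsto (fun p => Real.log (δd p) / δd p) l (𝓝 0) :=
    (Real.isLittleO_log_id_atTop.tendsto_div_nhds_zero).comp htop
  have hKdiv : Tendsto (fun p => K / δd p) l (𝓝 0) := tendsto_const_nhds.div_atTop htop
  have hAdiv : Tendsto
      (fun p => (δd p - (s - 1) * Real.log (δd p) - Real.log (1 / p)) / δd p) l (𝓝 0) := by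
    apply squeeze_zero_norm' _ hKdiv
    filter_upwards [hbound, htop.eventually_ge_atTop 1] with p hb h1
    have hx0 : 0 < δd p := lt_of_lt_of_le one_pos h1
    rw [Real.norm_eq_abs, abs_div, abs_of_pos hx0]
    gcongr
  have heq : ∀ᶠ p in l, 1 - (s - 1) * (Real.log (δd p) / δd p)
      - (δd p - (s - 1) * Real.log (δd p) - Real.log (1 / p)) / δd p
      = Real.log (1 / p) / δd p := by
    filter_upwards [htop.eventually_ge_atTop 1] with p h1
    have hne : δd p ≠ 0 := ne_of_gt (lt_of_lt_of_le one_pos h1)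
    field_simp
    ring
  have htend : Tendsto (fun p => Real.log (1 / p) / δd p) l (𝓝 1) := by
    have h := (((tendsto_const_nhds : Tendsto (fun _ : ℝ => (1:ℝ)) l (𝓝 1)).sub
      ((tendsto_const_nhds : Tendsto (fun _ : ℝ => s - 1) l (𝓝 (s - 1))).mul hlogdiv)).sub hAdiv)
    have h2 : (1:ℝ) - (s - 1) * 0 - 0 = 1 := by ring
    rw [h2] at h
    exact h.congr' heq
  have htend2 : Tendsto (fun p => δd p / Real.log (1 / p)) l (𝓝 1) := by
    have h := htend.inv₀ one_ne_zero
    simp only [inv_div, inv_one] at h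
    exact h
  have hlogquot : Tendsto (fun p => Real.log (δd p / Real.log (1 / p))) l (𝓝 0) := by
    have h := ((Real.continuousAt_log one_ne_zero).tendsto).comp htend2
    simpa [Function.comp_def] using h
  have hsmall : ∀ᶠ p in l, |Real.log (δd p / Real.log (1 / p))| ≤ 1 := by
    have h := Metric.tendsto_nhds.mp hlogquot 1 one_pos
    filter_upwards [h] with p hp
    rw [Real.dist_eq, sub_zero] at hp
    exact hp.le
  refine ⟨?_, htend2⟩
  rw [Asymptotics.isBigO_iff]
  refine ⟨K + |s - 1|, ?_⟩
  filter_upwards [hbound, hsmall, hmem, htop.eventually_ge_atTop 1] with p hb hsm hp h1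
  have hLpos : 0 < Real.log (1 / p) := Real.log_pos (one_lt_one_div hp.1 hp.2)
  have hxpos : 0 < δd p := lt_of_lt_of_le one_pos h1
  have hdivlog : Real.log (δd p) - Real.log (Real.log (1 / p))
      = Real.log (δd p / Real.log (1 / p)) :=
    (Real.log_div (ne_of_gt hxpos) (ne_of_gt hLpos)).symm
  have hsplit : δd p - Real.log (1 / p) - (s - 1) * Real.log (Real.log (1 / p))
      = (δd p - (s - 1) * Real.log (δd p) - Real.log (1 / p))
        + (s - 1) * (Real.log (δd p) - Real.log (Real.log (1 / p))) := by ring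
  rw [Real.norm_eq_abs, norm_one, mul_one, hsplit, hdivlog]
  calc |(δd p - (s - 1) * Real.log (δd p) - Real.log (1 / p))
        + (s - 1) * Real.log (δd p / Real.log (1 / p))|
      ≤ |δd p - (s - 1) * Real.log (δd p) - Real.log (1 / p)|
        + |(s - 1) * Real.log (δd p / Real.log (1 / p))| := abs_add_le _ _
    _ ≤ K + |s - 1| := by
        rw [abs_mul]
        have h2 : |s - 1| * |Real.log (δd p / Real.log (1 / p))| ≤ |s - 1| * 1 :=
          mul_le_mul_of_nonneg_left hsm (abs_nonneg _)
        linarith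
end
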